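/- Let Γ = ⟨α_1, …, α_k⟩ ⊂ ℕ^d be an affine semigroup with Δ(Γ) nonempty. Then every element of Δ(Γ) is a multiple of min Δ(Γ) and lies in the interval [min Δ(Γ), max Δ(Γ)]; in particular min Δ(Γ) = gcd Δ(Γ). -/

import Mathlib

open Finset

/-- The factorization homomorphism `φ_Γ : ℕ^k → ℕ^d` determined by the
generators `α 1, …, α k`. -/
def phi {d k : ℕ} (α : Fin k → Fin d → ℕ) (z : Fin k → ℕ) : Fin d → ℕ :=
  ∑ i, z i • α i

/-- The length `|z|` of a factorization. -/
def len {k : ℕ} (z : Fin k → ℕ) : ℕ := ∑ i, z i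

/-- The length set `L_Γ(γ)`. -/
def lengthSet {d k : ℕ} (α : Fin k → Fin d → ℕ) (γ : Fin d → ℕ) : Set ℕ :=
  len '' {z | phi α z = γ}

/-- The set of successive differences (gaps) of a set of naturals. -/
def deltaOf (L : Set ℕ) : Set ℕ :=
  {δ | 0 < δ ∧ ∃ a, a ∈ L ∧ a + δ ∈ L ∧ ∀ c ∈ L, ¬(a < c ∧ c < a + δ)}

/-- The delta set `Δ(Γ)` of the affine semigroup generated by `α`. -/
def deltaSet {d k : ℕ} (α : Fin k → Fin d → ℕ) : Set ℕ :=
  ⋃ γ ∈ Set.range (phi α), deltaOf (lengthSet α γ)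

namespace Stmt2Aux

variable {d k : ℕ}

lemma phi_add (α : Fin k → Fin d → ℕ) (x y : Fin k → ℕ) :
    phi α (x + y) = phi α x + phi α y := by
  simp [phi, add_smul, Finset.sum_add_distrib]

lemma len_add (x y : Fin k → ℕ) : len (x + y) = len x + len y := by
  simp [len, Finset.sum_add_distrib]

lemma phi_smul (α : Fin k → Fin d → ℕ) (c : ℕ) (x : Fin k → ℕ) :
    phi α (c • x) = c • phi α x := by
  simp [phi, Finset.smul_sum, mul_smul]

lemma len_smul (c : ℕ) (x : Fin k → ℕ) : len (c • x) = c * len x := by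
  simp [len, Finset.mul_sum]

lemma len_mono {x y : Fin k → ℕ} (h : x ≤ y) : len x ≤ len y :=
  Finset.sum_le_sum fun i _ => h i

lemma len_strict_mono {x y : Fin k → ℕ} (h : x ≤ y) (hne : x ≠ y) : len x < len y := by
  have : ∃ i, x i ≠ y i := by
    by_contra hc
    push_neg at hc
    exact hne (funext hc)
  obtain ⟨i, hi⟩ := this
  exact Finset.sum_lt_sum (fun j _ => h j) ⟨i, Finset.mem_univ i, lt_of_le_of_ne (h i) hi⟩

/-- Gap lemma: between two elements of `L` there is a consecutive gap bounded by
their difference. -/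
lemma exists_gap {L : Set ℕ} {a b : ℕ} (ha : a ∈ L) (hb : b ∈ L) (hab : a < b) :
    ∃ δ ∈ deltaOf L, δ ≤ b - a := by
  set T : Set ℕ := {l | l ∈ L ∧ a ≤ l ∧ l < b} with hT
  have hTne : T.Nonempty := ⟨a, ha, le_rfl, hab⟩
  have hTbdd : BddAbove T := ⟨b, fun l hl => hl.2.2.le⟩
  have hc : sSup T ∈ T := Nat.sSup_mem hTne hTbdd
  set c := sSup T with hcdef
  set U : Set ℕ := {l | l ∈ L ∧ c < l ∧ l ≤ b} with hU
  have hUne : U.Nonempty := ⟨b, hb, hc.2.2, le_rfl⟩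
  have hc' : sInf U ∈ U := Nat.sInf_mem hUne
  set c' := sInf U with hc'def
  have hcc' : c < c' := hc'.2.1
  have hkey : c + (c' - c) = c' := by omega
  refine ⟨c' - c, ⟨by omega, c, hc.1, ?_, ?_⟩, ?_⟩
  · rw [hkey]; exact hc'.1
  · rw [hkey]
    intro l hl ⟨h1, h2⟩
    rcases lt_or_ge l b with hlb | hlb
    · have : l ∈ T := ⟨hl, le_trans hc.2.1 h1.le, hlb⟩
      have : l ≤ c := le_csSup hTbdd this
      omega
    · have := hc'.2.2
      omega
  · have h1 : a ≤ c := hc.2.1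
    have h2 : c' ≤ b := hc'.2.2
    omega


/-- The set of pairs of factorizations of the same element, first strictly shorter. -/
def S (α : Fin k → Fin d → ℕ) : Set ((Fin k → ℕ) × (Fin k → ℕ)) :=
  {p | phi α p.1 = phi α p.2 ∧ len p.1 < len p.2}

/-- Minimal elements of `S`. -/
def M (α : Fin k → Fin d → ℕ) : Set ((Fin k → ℕ) × (Fin k → ℕ)) :=
  {p ∈ S α | ∀ q ∈ S α, q ≤ p → q = p}

lemma M_finite (α : Fin k → Fin d → ℕ) : (M α).Finite := by
  have h1 : (Set.univ : Set (Fin k → ℕ)).IsPWO :=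
    Set.isPWO_of_wellQuasiOrderedLE Set.univ
  have hpwo : (M α).IsPWO :=
    (h1.prod h1).mono (fun p _ => ⟨Set.mem_univ _, Set.mem_univ _⟩)
  have hanti : IsAntichain (· ≤ ·) (M α) := by
    intro p hp q hq hne hpq
    exact hne (hq.2 p hp.1 hpq)
  exact hanti.finite_of_partiallyWellOrderedOn hpwo

lemma exists_min (α : Fin k → Fin d → ℕ) :
    ∀ N p, len p.1 + len p.2 ≤ N → p ∈ S α → ∃ q ∈ M α, q ≤ p := by
  intro N
  induction N with
  | zero =>
    intro p hlen hp
    exact absurd hp.2 (by omega)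
  | succ n ih =>
    intro p hlen hp
    by_cases hmin : ∀ q ∈ S α, q ≤ p → q = p
    · exact ⟨p, ⟨hp, hmin⟩, le_rfl⟩
    · push_neg at hmin
      obtain ⟨q, hq, hqp, hne⟩ := hmin
      have h1 : len q.1 ≤ len p.1 := len_mono hqp.1
      have h2 : len q.2 ≤ len p.2 := len_mono hqp.2
      have hlt : len q.1 + len q.2 < len p.1 + len p.2 := by
        by_cases hc : q.1 = p.1
        · have : q.2 ≠ p.2 := fun hc2 => hne (Prod.ext hc hc2)
          have := len_strict_mono hqp.2 this
          omega
        · have := len_strict_mono hqp.1 hc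
          omega
      obtain ⟨r, hr, hrq⟩ := ih q (by omega) hq
      exact ⟨r, hr, hrq.trans hqp⟩

/-- The global bound on delta sets. -/
noncomputable def B (α : Fin k → Fin d → ℕ) : ℕ :=
  (M_finite α).toFinset.sup (fun p => len p.2 - len p.1)

lemma delta_le_B (α : Fin k → Fin d → ℕ) {δ : ℕ} (hδ : δ ∈ deltaSet α) : δ ≤ B α := by
  simp only [deltaSet, Set.mem_iUnion, Set.mem_range, exists_prop'] at hδ
  obtain ⟨γ, -, hδpos, a, ha, ha', hgap⟩ := hδ
  obtain ⟨z, hz, hzl⟩ := ha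
  obtain ⟨z', hz', hzl'⟩ := ha'
  have hpS : (z, z') ∈ S α := by
    refine ⟨hz.trans hz'.symm, ?_⟩
    simp only [Set.mem_setOf_eq] at hz hz'
    rw [hzl, hzl']; omega
  obtain ⟨⟨x, y⟩, hqM, hqle⟩ := exists_min α (len z + len z') (z, z') le_rfl hpS
  have hphixy : phi α x = phi α y := hqM.1.1
  have hxy' : len x < len y := hqM.1.2
  have hxz : x ≤ z := hqle.1
  have hw : phi α (z - x + y) = γ := by
    rw [phi_add, ← hphixy, ← phi_add, tsub_add_cancel_of_le hxz]
    exact hz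
  have hlx : len x ≤ len z := len_mono hxz
  have hlzx : len (z - x) = len z - len x := by
    have : len (z - x) + len x = len z := by
      rw [← len_add, tsub_add_cancel_of_le hxz]
    omega
  have hlw : len (z - x + y) = len z - len x + len y := by rw [len_add, hlzx]
  have hwmem : len (z - x + y) ∈ lengthSet α γ := ⟨z - x + y, hw, rfl⟩
  have hgt : a < len (z - x + y) := by
    rw [hlw]; omega
  have hge : a + δ ≤ len (z - x + y) := by
    by_contra hcon
    exact hgap _ hwmem ⟨hgt, by omega⟩
  have hB : len y - len x ≤ B α :=
    Finset.le_sup (f := fun p => len p.2 - len p.1)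
      ((M_finite α).mem_toFinset.mpr hqM)
  omega


lemma deltaSet_pos (α : Fin k → Fin d → ℕ) {δ : ℕ} (hδ : δ ∈ deltaSet α) : 0 < δ := by
  simp only [deltaSet, Set.mem_iUnion, Set.mem_range] at hδ
  obtain ⟨γ, -, h, -⟩ := hδ
  exact h

lemma bezout {δ1 δ2 : ℕ} (h1 : 0 < δ1) (h2 : 0 < δ2) :
    ∃ u v : ℕ, u * δ1 = v * δ2 + Nat.gcd δ1 δ2 := by
  obtain ⟨a, b, hab⟩ : ∃ a b : ℤ, (Nat.gcd δ1 δ2 : ℤ) = δ1 * a + δ2 * b :=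
    ⟨Nat.gcdA δ1 δ2, Nat.gcdB δ1 δ2, Nat.gcd_eq_gcd_ab δ1 δ2⟩
  set t : ℤ := a.natAbs + b.natAbs + 1 with ht
  have hδ1 : (1:ℤ) ≤ (δ1:ℤ) := by exact_mod_cast h1
  have hδ2 : (1:ℤ) ≤ (δ2:ℤ) := by exact_mod_cast h2
  have ht0 : (0:ℤ) ≤ t := by positivity
  have hta : t ≤ t * δ2 := le_mul_of_one_le_right ht0 hδ2
  have htb : t ≤ t * δ1 := le_mul_of_one_le_right ht0 hδ1
  have hna : -(a.natAbs : ℤ) ≤ a := neg_abs_le a |>.trans_eq' (by rw [Int.abs_eq_natAbs])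
  have hnb : b ≤ (b.natAbs : ℤ) := Int.le_natAbs
  have e1 : (0:ℤ) ≤ a + t * δ2 := by
    have : (a.natAbs : ℤ) ≤ t := by rw [ht]; omega
    linarith
  have e2 : (0:ℤ) ≤ -b + t * δ1 := by
    have : (b.natAbs : ℤ) ≤ t := by rw [ht]; omega
    linarith
  refine ⟨(a + t * δ2).toNat, (-b + t * δ1).toNat, ?_⟩
  have key : ((a + t * δ2).toNat : ℤ) * δ1
      = ((-b + t * δ1).toNat : ℤ) * δ2 + (Nat.gcd δ1 δ2 : ℤ) := by
    rw [Int.toNat_of_nonneg e1, Int.toNat_of_nonneg e2]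
    linear_combination -hab
  exact_mod_cast key

lemma sInf_le_gcd (α : Fin k → Fin d → ℕ) {δ1 δ2 : ℕ}
    (h1 : δ1 ∈ deltaSet α) (h2 : δ2 ∈ deltaSet α) :
    sInf (deltaSet α) ≤ Nat.gcd δ1 δ2 := by
  simp only [deltaSet, Set.mem_iUnion, Set.mem_range] at h1 h2
  obtain ⟨γ1, -, hp1, a1, ha1, ha1', -⟩ := h1
  obtain ⟨γ2, -, hp2, a2, ha2, ha2', -⟩ := h2
  obtain ⟨z1, hz1, hl1⟩ := ha1
  obtain ⟨z1', hz1', hl1'⟩ := ha1'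
  obtain ⟨z2, hz2, hl2⟩ := ha2
  obtain ⟨z2', hz2', hl2'⟩ := ha2'
  simp only [Set.mem_setOf_eq] at hz1 hz1' hz2 hz2'
  obtain ⟨u, v, huv⟩ := bezout hp1 hp2
  set w' : Fin k → ℕ := u • z1 + v • z2' with hw'def
  set w : Fin k → ℕ := u • z1' + v • z2 with hwdef
  have hphiw : phi α w = phi α w' := by
    rw [hwdef, hw'def, phi_add, phi_add, phi_smul, phi_smul, phi_smul, phi_smul,
      hz1, hz1', hz2, hz2']
  have hlenw : len w = len w' + Nat.gcd δ1 δ2 := by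
    rw [hwdef, hw'def, len_add, len_add, len_smul, len_smul, len_smul, len_smul,
      hl1, hl1', hl2, hl2', Nat.mul_add, Nat.mul_add, huv]
    ring
  have hgpos : 0 < Nat.gcd δ1 δ2 := Nat.gcd_pos_of_pos_left _ hp1
  have hmem' : len w' ∈ lengthSet α (phi α w') := ⟨w', rfl, rfl⟩
  have hmem : len w ∈ lengthSet α (phi α w') := ⟨w, hphiw, rfl⟩
  obtain ⟨δ, hδ, hδle⟩ := exists_gap hmem' hmem (by omega)
  have hδΔ : δ ∈ deltaSet α := Set.mem_biUnion ⟨w', rfl⟩ hδ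
  calc sInf (deltaSet α) ≤ δ := Nat.sInf_le hδΔ
    _ ≤ Nat.gcd δ1 δ2 := by omega

end Stmt2Aux

/-- If `Γ = ⟨α_1,…,α_k⟩ ⊂ ℕ^d` is an affine semigroup (minimally generated by
`α_1,…,α_k`) with `Δ(Γ)` nonempty, then every element of `Δ(Γ)` is a multiple of
`min Δ(Γ)` and lies in `[min Δ(Γ), max Δ(Γ)]`; in particular
`min Δ(Γ) = gcd Δ(Γ)`. -/
theorem stmt2 {d k : ℕ} (α : Fin k → Fin d → ℕ)
    (hne : ∀ i, α i ≠ 0)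
    (hmin : ∀ i, α i ∉ AddSubmonoid.closure (α '' {j | j ≠ i}))
    (hΔ : (deltaSet α).Nonempty) :
    (∀ n ∈ deltaSet α,
      sInf (deltaSet α) ∣ n ∧ sInf (deltaSet α) ≤ n ∧ n ≤ sSup (deltaSet α)) ∧
    (∀ m : ℕ, (∀ n ∈ deltaSet α, m ∣ n) → m ∣ sInf (deltaSet α)) := by
  have hmem : sInf (deltaSet α) ∈ deltaSet α := Nat.sInf_mem hΔ
  have hbdd : BddAbove (deltaSet α) := ⟨Stmt2Aux.B α, fun δ hδ => Stmt2Aux.delta_le_B α hδ⟩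
  have hpos : 0 < sInf (deltaSet α) := Stmt2Aux.deltaSet_pos α hmem
  refine ⟨fun n hn => ?_, fun m hm => hm _ hmem⟩
  have h1 := Stmt2Aux.sInf_le_gcd α hmem hn
  have h2 : Nat.gcd (sInf (deltaSet α)) n ≤ sInf (deltaSet α) :=
    Nat.le_of_dvd hpos (Nat.gcd_dvd_left _ _)
  have hg : Nat.gcd (sInf (deltaSet α)) n = sInf (deltaSet α) := le_antisymm h2 h1
  exact ⟨hg ▸ Nat.gcd_dvd_right (sInf (deltaSet α)) n, Nat.sInf_le hn, le_csSup hbdd hn⟩
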